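/- Let (X,S) be a minimal subshift. Then I(X,S) = ⋂_{μ∈M(X,S)} ⟨{μ([w]) : w ∈ L(X)}⟩, where ⟨N⟩ denotes the additive subgroup of ℝ generated by the family N. In particular, if (X,S) is uniquely ergodic with unique S-invariant probability measure μ, then I(X,S) = ⟨{μ([w]) : w ∈ L(X)}⟩. -/

import Mathlib

set_option linter.unusedSectionVars false


open MeasureTheory Filter

section SadicPrelude

variable {A : Type*}

/-- The shift map on bi-infinite words. -/
def shift (x : ℤ → A) : ℤ → A := fun n => x (n + 1)

/-- The word `w` occurs (as a factor) in the bi-infinite word `x`. -/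
def OccursIn (w : List A) (x : ℤ → A) : Prop :=
  ∃ i : ℤ, ∀ k : Fin w.length, x (i + (k.1 : ℤ)) = w.get k

/-- The language of a subshift `X`. -/
def Lang (X : Set (ℤ → A)) : Set (List A) := {w | ∃ x ∈ X, OccursIn w x}

/-- Apply a morphism (substitution) to a word, by concatenation. -/
def wordApply (σ : A → List A) (w : List A) : List A := w.flatMap σ

/-- Composition of morphisms: first apply `τ`, then `σ`. -/
def morComp (σ τ : A → List A) : A → List A := fun a => wordApply σ (τ a)

/-- A morphism is non-erasing if images of letters are nonempty. -/
def NonErasing (σ : A → List A) : Prop := ∀ a, σ a ≠ []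

/-- Incidence matrix of a morphism: entry `(b,a)` is the number of occurrences of `b` in `σ a`. -/
def incMat [Fintype A] [DecidableEq A] (σ : A → List A) : Matrix A A ℤ :=
  Matrix.of fun b a => ((σ a).count b : ℤ)

/-- A morphism is unimodular if its incidence matrix has determinant ±1. -/
def IsUnimodular [Fintype A] [DecidableEq A] (σ : A → List A) : Prop :=
  (incMat σ).det = 1 ∨ (incMat σ).det = -1

/-- Left proper: all images start with the same letter. -/
def IsLeftProper (σ : A → List A) : Prop := ∃ b : A, ∀ a, (σ a).head? = some b

/-- Right proper: all images end with the same letter. -/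
def IsRightProper (σ : A → List A) : Prop := ∃ b : A, ∀ a, (σ a).getLast? = some b

/-- Proper: left and right proper. -/
def IsProper (σ : A → List A) : Prop := IsLeftProper σ ∧ IsRightProper σ

/-- `compFrom τ n m` is the composition `τ_n ∘ τ_{n+1} ∘ ⋯ ∘ τ_{n+m-1}`. -/
def compFrom (τ : ℕ → A → List A) (n : ℕ) : ℕ → A → List A
  | 0 => fun a => [a]
  | m + 1 => morComp (compFrom τ n m) (τ (n + m))

/-- `compSeq τ n` is the composition `τ_0 ∘ τ_1 ∘ ⋯ ∘ τ_{n-1}`. -/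
def compSeq (τ : ℕ → A → List A) : ℕ → A → List A := compFrom τ 0

/-- The maximal length of images of letters under `τ_0 ∘ ⋯ ∘ τ_{n-1}` tends to infinity. -/
def GrowsUnbounded [Fintype A] (τ : ℕ → A → List A) : Prop :=
  Tendsto (fun n => Finset.univ.sup fun a : A => (compSeq τ n a).length) atTop atTop

/-- A directive sequence is primitive if for all `n` there is `m > 0` such that every letter
occurs in every image of `τ_n ∘ ⋯ ∘ τ_{n+m-1}`. -/
def IsPrimitive (τ : ℕ → A → List A) : Prop :=
  ∀ n : ℕ, ∃ m : ℕ, 0 < m ∧ ∀ a b : A, b ∈ compFrom τ n m a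

/-- The language of a directive sequence: all factors of the images `τ_0 ∘ ⋯ ∘ τ_{n-1}(a)`. -/
def SadicLang (τ : ℕ → A → List A) : Set (List A) :=
  {w | ∃ (n : ℕ) (a : A), w <:+: compSeq τ n a}

/-- The S-adic subshift generated by a directive sequence. -/
def SadicShift (τ : ℕ → A → List A) : Set (ℤ → A) :=
  {x | ∀ w : List A, OccursIn w x → w ∈ SadicLang τ}

/-- The shift map restricted to an invariant set `X`. -/
def shiftOn (X : Set (ℤ → A)) (h : ∀ x ∈ X, shift x ∈ X) : X → X :=
  fun x => ⟨shift x.1, h x.1 x.2⟩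

/-- The cylinder of a letter `a` inside `X`. -/
def cylLetter (X : Set (ℤ → A)) (a : A) : Set X := {x : X | x.1 0 = a}

/-- The cylinder of a word `w` inside `X`. -/
def cylWord (X : Set (ℤ → A)) (w : List A) : Set X :=
  {x : X | ∀ k : Fin w.length, x.1 (k.1 : ℤ) = w.get k}

/-- `μ` is a `T`-invariant Borel probability measure. -/
def InvProb {Y : Type*} [MeasurableSpace Y] (T : Y → Y) (μ : Measure Y) : Prop :=
  IsProbabilityMeasure μ ∧ MeasurePreserving T μ μ

/-- A real-valued function is balanced for the dynamical system given by `T`. -/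
def IsBalanced {Y : Type*} (T : Y → Y) (f : Y → ℝ) : Prop :=
  ∃ C : ℝ, 0 < C ∧ ∀ x y : Y, ∀ n : ℕ,
    |∑ i ∈ Finset.range (n + 1), (f (T^[i] x) - f (T^[i] y))| ≤ C

end SadicPrelude

section AuxProof

open Set MeasureTheory

variable {A : Type*} [Fintype A] [DecidableEq A] [TopologicalSpace A] [DiscreteTopology A]
  [MeasurableSpace A] [MeasurableSingletonClass A] {X : Set (ℤ → A)}

lemma cylWord_eq_iInter (w : List A) :
    cylWord X w = ⋂ k : Fin w.length, (fun x : ↥X => x.1 (k.1 : ℤ)) ⁻¹' {w.get k} := by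
  ext x
  simp only [cylWord, Set.mem_setOf_eq, Set.mem_iInter, Set.mem_preimage, Set.mem_singleton_iff]

lemma measurableSet_cylWord (w : List A) : MeasurableSet (cylWord X w) := by
  rw [cylWord_eq_iInter]
  exact MeasurableSet.iInter fun k =>
    ((measurable_pi_apply _).comp measurable_subtype_coe) (measurableSet_singleton _)

lemma isClopen_cylWord (w : List A) : IsClopen (cylWord X w) := by
  rw [cylWord_eq_iInter]
  have h : ∀ k : Fin w.length, IsClopen ((fun x : ↥X => x.1 (k.1 : ℤ)) ⁻¹' {w.get k}) :=
    fun k => (isClopen_discrete _).preimage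
      ((continuous_apply ((k : ℕ) : ℤ)).comp continuous_subtype_val)
  exact ⟨isClosed_iInter fun k => (h k).1, isOpen_iInter_of_finite fun k => (h k).2⟩

lemma continuous_shiftOn (hS : ∀ x ∈ X, shift x ∈ X) : Continuous (shiftOn X hS) := by
  apply Continuous.subtype_mk
  exact (continuous_pi fun n => (continuous_apply (n + 1))).comp continuous_subtype_val

lemma shiftOn_iterate_apply (hS : ∀ x ∈ X, shift x ∈ X) (N : ℕ) (x : ↥X) (i : ℤ) :
    (((shiftOn X hS)^[N]) x).1 i = x.1 (i + N) := by
  induction N generalizing i with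
  | zero => simp
  | succ n ih =>
    rw [Function.iterate_succ_apply']
    have h1 : ((shiftOn X hS) ((shiftOn X hS)^[n] x)).1 i
        = ((shiftOn X hS)^[n] x).1 (i + 1) := rfl
    rw [h1, ih (i + 1)]
    congr 1
    push_cast
    ring

lemma mem_cylWord_ofFn {L : ℕ} (u : Fin L → A) (x : ↥X) :
    x ∈ cylWord X (List.ofFn u) ↔ ∀ k : Fin L, x.1 (k.1 : ℤ) = u k := by
  constructor
  · intro h k
    have := h (Fin.cast (List.length_ofFn : (List.ofFn u).length = L).symm k)
    simpa [List.get_ofFn] using this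
  · intro h k
    have := h (Fin.cast (List.length_ofFn : (List.ofFn u).length = L) k)
    simp [List.get_ofFn] at this ⊢
    exact this

lemma exists_bound (hclosed : IsClosed X) (f : C(↥X, ℤ)) :
    ∃ N : ℕ, ∀ x y : ↥X, (∀ i : ℤ, |i| ≤ (N : ℤ) → x.1 i = y.1 i) → f x = f y := by
  classical
  haveI : CompactSpace ↥X := isCompact_iff_compactSpace.mp hclosed.isCompact
  have key : ∀ x : ↥X, ∃ I : Finset ℤ,
      ∀ y : ↥X, (∀ i ∈ I, y.1 i = x.1 i) → f y = f x := by
    intro x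
    have hopen : IsOpen (f ⁻¹' {f x}) := (isOpen_discrete _).preimage f.continuous
    obtain ⟨V, hV, hVeq⟩ := isOpen_induced_iff.mp hopen
    have hxV : x.1 ∈ V := by
      have hx : x ∈ f ⁻¹' {f x} := rfl
      rw [← hVeq] at hx
      exact hx
    obtain ⟨I, u, hu, hsub⟩ := isOpen_pi_iff.mp hV x.1 hxV
    refine ⟨I, fun y hy => ?_⟩
    have hyV : y.1 ∈ V := hsub fun i hi => by
      rw [hy i hi]; exact (hu i hi).2
    have : y ∈ f ⁻¹' {f x} := by rw [← hVeq]; exact hyV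
    exact this
  choose I hI using key
  set W : ↥X → Set ↥X := fun x => ⋂ i ∈ I x, (fun y : ↥X => y.1 i) ⁻¹' {x.1 i} with hW
  have hWopen : ∀ x, IsOpen (W x) := fun x =>
    isOpen_biInter_finset fun i _ =>
      (isOpen_discrete _).preimage ((continuous_apply i).comp continuous_subtype_val)
  have hmemW : ∀ x y : ↥X, y ∈ W x ↔ ∀ i ∈ I x, y.1 i = x.1 i := by
    intro x y
    simp [hW, Set.mem_iInter]
  have hcover : (Set.univ : Set ↥X) ⊆ ⋃ x, W x := fun x _ =>
    Set.mem_iUnion.2 ⟨x, (hmemW x x).2 fun i _ => rfl⟩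
  obtain ⟨t, ht⟩ := isCompact_univ.elim_finite_subcover W hWopen hcover
  refine ⟨t.sup fun x => (I x).sup fun i => i.natAbs, fun x y hxy => ?_⟩
  obtain ⟨x₀, hx₀t, hxW⟩ := Set.mem_iUnion₂.mp (ht (Set.mem_univ x))
  have hIx : ∀ i ∈ I x₀, x.1 i = x₀.1 i := (hmemW x₀ x).1 hxW
  have hbound : ∀ i ∈ I x₀, |i| ≤ ((t.sup fun x => (I x).sup fun i => i.natAbs : ℕ) : ℤ) := by
    intro i hi
    have h1 : i.natAbs ≤ (I x₀).sup fun i => i.natAbs := Finset.le_sup hi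
    have h2 : ((I x₀).sup fun i => i.natAbs) ≤ t.sup fun x => (I x).sup fun i => i.natAbs :=
      Finset.le_sup (f := fun x => (I x).sup fun i => i.natAbs) hx₀t
    rw [Int.abs_eq_natAbs]
    exact_mod_cast h1.trans h2
  have hfx : f x = f x₀ := hI x₀ x hIx
  have hfy : f y = f x₀ := hI x₀ y fun i hi => by
    rw [← hxy i (hbound i hi)]
    exact hIx i hi
  rw [hfx, hfy]

lemma main_eq (hclosed : IsClosed X) (hS : ∀ x ∈ X, shift x ∈ X)
    (μ : Measure ↥X) (hμ : InvProb (shiftOn X hS) μ) :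
    {α : ℝ | ∃ f : C(↥X, ℤ), α = ∫ x, (f x : ℝ) ∂μ} =
      ((AddSubgroup.closure
        {α : ℝ | ∃ w ∈ Lang X, (μ (cylWord X w)).toReal = α} : AddSubgroup ℝ) : Set ℝ) := by
  classical
  haveI : CompactSpace ↥X := isCompact_iff_compactSpace.mp hclosed.isCompact
  haveI := hμ.1
  have hint : ∀ f : C(↥X, ℤ), Integrable (fun x => ((f x : ℤ) : ℝ)) μ := fun f =>
    (continuous_of_discreteTopology.comp f.continuous).integrable_of_hasCompactSupport
      (HasCompactSupport.of_compactSpace _)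
  apply Set.Subset.antisymm
  · rintro α ⟨f, rfl⟩
    obtain ⟨N, hN⟩ := exists_bound hclosed f
    have hTi : Continuous ((shiftOn X hS)^[N]) := (continuous_shiftOn hS).iterate N
    set g : C(↥X, ℤ) := f.comp ⟨(shiftOn X hS)^[N], hTi⟩ with hg
    set L := 2 * N + 1 with hLdef
    have hgconst : ∀ x y : ↥X, (∀ k : Fin L, x.1 (k.1 : ℤ) = y.1 (k.1 : ℤ)) → g x = g y := by
      intro x y h
      apply hN
      intro i hi
      show (((shiftOn X hS)^[N]) x).1 i = (((shiftOn X hS)^[N]) y).1 i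
      rw [shiftOn_iterate_apply hS N x i, shiftOn_iterate_apply hS N y i]
      obtain ⟨hi1, hi2⟩ := abs_le.mp hi
      have hnn : (0 : ℤ) ≤ i + N := by omega
      have hlt : (i + N).toNat < L := by omega
      have := h ⟨(i + N).toNat, hlt⟩
      simpa [Int.toNat_of_nonneg hnn] using this
    have hmap : Measure.map ((shiftOn X hS)^[N]) μ = μ := (hμ.2.iterate N).map_eq
    have hInt_eq : ∫ x, ((f x : ℤ) : ℝ) ∂μ = ∫ x, ((g x : ℤ) : ℝ) ∂μ := by
      have hcont : Continuous fun x : ↥X => ((f x : ℤ) : ℝ) :=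
        continuous_of_discreteTopology.comp f.continuous
      have h1 : ∫ x, ((f x : ℤ) : ℝ) ∂(Measure.map ((shiftOn X hS)^[N]) μ)
          = ∫ x, ((f (((shiftOn X hS)^[N]) x) : ℤ) : ℝ) ∂μ :=
        integral_map hTi.measurable.aemeasurable hcont.aestronglyMeasurable
      rw [hmap] at h1
      exact h1.trans rfl
    set c : (Fin L → A) → ℝ := fun u =>
      if h : (cylWord X (List.ofFn u)).Nonempty then ((g h.choose : ℤ) : ℝ) else 0 with hc
    have hpt : ∀ x : ↥X, ((g x : ℤ) : ℝ) =
        ∑ u : Fin L → A, Set.indicator (cylWord X (List.ofFn u)) (fun _ => c u) x := by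
      intro x
      have hx0 : x ∈ cylWord X (List.ofFn fun k : Fin L => x.1 (k.1 : ℤ)) :=
        (mem_cylWord_ofFn _ x).mpr fun k => rfl
      rw [Finset.sum_eq_single_of_mem (fun k : Fin L => x.1 (k.1 : ℤ)) (Finset.mem_univ _)]
      · rw [Set.indicator_of_mem hx0]
        have hne : (cylWord X (List.ofFn fun k : Fin L => x.1 (k.1 : ℤ))).Nonempty := ⟨x, hx0⟩
        rw [hc]
        simp only [dif_pos hne]
        have hch := hne.choose_spec
        rw [mem_cylWord_ofFn] at hch
        have : g x = g hne.choose := hgconst x hne.choose fun k => (hch k).symm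
        exact_mod_cast this
      · intro u _ hu
        apply Set.indicator_of_notMem
        intro hmem
        apply hu
        funext k
        exact ((mem_cylWord_ofFn u x).mp hmem k).symm
    have hIble : ∀ u : Fin L → A,
        Integrable (Set.indicator (cylWord X (List.ofFn u)) fun _ => c u) μ := fun u =>
      (integrable_const (c u)).indicator (measurableSet_cylWord _)
    have hform : ∫ x, ((f x : ℤ) : ℝ) ∂μ
        = ∑ u : Fin L → A, (μ (cylWord X (List.ofFn u))).toReal • c u := by
      rw [hInt_eq]
      calc ∫ x, ((g x : ℤ) : ℝ) ∂μ
          = ∫ x, ∑ u : Fin L → A,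
              Set.indicator (cylWord X (List.ofFn u)) (fun _ => c u) x ∂μ := by
            congr 1; funext x; exact hpt x
        _ = ∑ u : Fin L → A,
              ∫ x, Set.indicator (cylWord X (List.ofFn u)) (fun _ => c u) x ∂μ :=
            integral_finset_sum _ fun u _ => hIble u
        _ = ∑ u : Fin L → A, (μ (cylWord X (List.ofFn u))).toReal • c u :=
            Finset.sum_congr rfl fun u _ =>
              integral_indicator_const _ (measurableSet_cylWord _)
    show (∫ x, ((f x : ℤ) : ℝ) ∂μ) ∈ AddSubgroup.closure
      {α : ℝ | ∃ w ∈ Lang X, (μ (cylWord X w)).toReal = α}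
    rw [hform]
    apply AddSubgroup.sum_mem
    intro u _
    by_cases h : (cylWord X (List.ofFn u)).Nonempty
    · have hw : List.ofFn u ∈ Lang X := by
        obtain ⟨x, hx⟩ := h
        exact ⟨x.1, x.2, 0, fun k => by rw [zero_add]; exact hx k⟩
      have hgen : (μ (cylWord X (List.ofFn u))).toReal ∈ AddSubgroup.closure
          {α : ℝ | ∃ w ∈ Lang X, (μ (cylWord X w)).toReal = α} :=
        AddSubgroup.subset_closure ⟨List.ofFn u, hw, rfl⟩
      have hcu : c u = ((g h.choose : ℤ) : ℝ) := dif_pos h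
      rw [hcu]
      have hre : (μ (cylWord X (List.ofFn u))).toReal • ((g h.choose : ℤ) : ℝ)
          = (g h.choose) • (μ (cylWord X (List.ofFn u))).toReal := by
        rw [smul_eq_mul, zsmul_eq_mul]; ring
      rw [hre]
      exact AddSubgroup.zsmul_mem _ hgen _
    · rw [Set.not_nonempty_iff_eq_empty] at h
      rw [h]
      simp only [measure_empty, ENNReal.toReal_zero, zero_smul]
      exact zero_mem _
  · set G : AddSubgroup ℝ :=
      { carrier := {α : ℝ | ∃ f : C(↥X, ℤ), α = ∫ x, (f x : ℝ) ∂μ}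
        zero_mem' := ⟨0, by simp⟩
        add_mem' := by
          rintro a b ⟨f, rfl⟩ ⟨k, rfl⟩
          refine ⟨f + k, ?_⟩
          have : (fun x => (((f + k) x : ℤ) : ℝ))
              = fun x => ((f x : ℤ) : ℝ) + ((k x : ℤ) : ℝ) := by
            funext x; push_cast [ContinuousMap.add_apply]; ring
          rw [this, integral_add (hint f) (hint k)]
        neg_mem' := by
          rintro a ⟨f, rfl⟩
          refine ⟨-f, ?_⟩
          have : (fun x => (((-f) x : ℤ) : ℝ)) = fun x => -((f x : ℤ) : ℝ) := by
            funext x; push_cast [ContinuousMap.neg_apply]; ring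
          rw [this, integral_neg] } with hG
    have hle : AddSubgroup.closure {α : ℝ | ∃ w ∈ Lang X, (μ (cylWord X w)).toReal = α} ≤ G := by
      rw [AddSubgroup.closure_le]
      rintro α ⟨w, hw, rfl⟩
      have hclop := isClopen_cylWord (X := X) w
      refine ⟨⟨fun x => if x ∈ cylWord X w then 1 else 0, ?_⟩, ?_⟩
      · exact continuous_if (by simp [hclop.frontier_eq]) continuous_const.continuousOn
          continuous_const.continuousOn
      · have : (fun x : ↥X => ((if x ∈ cylWord X w then (1 : ℤ) else 0 : ℤ) : ℝ))
            = Set.indicator (cylWord X w) fun _ => (1 : ℝ) := by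
          funext x
          by_cases h : x ∈ cylWord X w <;> simp [h]
        show (μ (cylWord X w)).toReal = ∫ x : ↥X, ((if x ∈ cylWord X w then (1 : ℤ) else 0 : ℤ) : ℝ) ∂μ
        rw [this, integral_indicator_const _ (measurableSet_cylWord w)]
        simp
        rfl
    exact fun α hα => hle hα

end AuxProof

theorem stmt1 {A : Type*} [Fintype A] [DecidableEq A] [TopologicalSpace A] [DiscreteTopology A]
    [MeasurableSpace A] [MeasurableSingletonClass A] (hcard : 2 ≤ Fintype.card A)
    (X : Set (ℤ → A)) (hclosed : IsClosed X) (hnonempty : X.Nonempty)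
    (hS : ∀ x ∈ X, shift x ∈ X)
    (hmin : ∀ F : Set (ℤ → A), F ⊆ X → IsClosed F → (∀ x ∈ F, shift x ∈ F) →
      F = ∅ ∨ F = X) :
    ((⋂ μ ∈ {μ : Measure ↥X | InvProb (shiftOn X hS) μ},
        {α : ℝ | ∃ f : C(↥X, ℤ), α = ∫ x, (f x : ℝ) ∂μ}) =
      ⋂ μ ∈ {μ : Measure ↥X | InvProb (shiftOn X hS) μ},
        ((AddSubgroup.closure
          {α : ℝ | ∃ w ∈ Lang X, (μ (cylWord X w)).toReal = α} : AddSubgroup ℝ) : Set ℝ))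
    ∧ ∀ μ : Measure ↥X, InvProb (shiftOn X hS) μ →
        (∀ ν : Measure ↥X, InvProb (shiftOn X hS) ν → ν = μ) →
        (⋂ μ' ∈ {μ' : Measure ↥X | InvProb (shiftOn X hS) μ'},
          {α : ℝ | ∃ f : C(↥X, ℤ), α = ∫ x, (f x : ℝ) ∂μ'}) =
        ((AddSubgroup.closure
          {α : ℝ | ∃ w ∈ Lang X, (μ (cylWord X w)).toReal = α} : AddSubgroup ℝ) : Set ℝ) := by
  constructor
  · exact Set.iInter_congr fun μ => Set.iInter_congr fun hμ => main_eq hclosed hS μ hμ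
  · intro μ hμ huniq
    have hset : {μ' : Measure ↥X | InvProb (shiftOn X hS) μ'} = {μ} := by
      ext ν
      simp only [Set.mem_setOf_eq, Set.mem_singleton_iff]
      exact ⟨fun h => huniq ν h, fun h => h ▸ hμ⟩
    rw [hset, Set.biInter_singleton]
    exact main_eq hclosed hS μ hμ
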